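/- Let U be a non-singular orthogonal geometry over a field F of characteristic ≠ 2, C(U) its universal Clifford algebra, and U_para = F·1 ⊕ U ⊆ C(U) the space of paravectors. If x ∈ C(U)^× satisfies x u (x')⁻¹ ∈ U for all u ∈ U (i.e., x ∈ Γ(U)), then x y (x')⁻¹ ∈ U_para for all y ∈ U_para; that is, Γ(U) ⊆ Γ(U_para). -/

import Mathlib

open CliffordAlgebra

section aux
variable {R M : Type*} [CommRing R] [AddCommGroup M] [Module R M] {Q : QuadraticForm R M}

lemma my_contractLeft_mul (d : Module.Dual R M) (a b : CliffordAlgebra Q) :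
    contractLeft (Q := Q) d (a * b) = (contractLeft d a) * b + involute a * (contractLeft d b) := by
  induction a using CliffordAlgebra.induction generalizing b with
  | algebraMap r =>
      rw [contractLeft_algebraMap_mul, contractLeft_algebraMap, AlgHom.commutes,
        zero_mul, zero_add, ← Algebra.smul_def]
  | ι m =>
      rw [contractLeft_ι_mul, contractLeft_ι, involute_ι, Algebra.smul_def]
      noncomm_ring
  | add a₁ a₂ h₁ h₂ =>
      rw [add_mul, map_add, map_add (contractLeft d), h₁, h₂, map_add]
      noncomm_ring
  | mul a₁ a₂ h₁ h₂ =>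
      rw [mul_assoc, h₁, h₂, h₁, map_mul involute]
      noncomm_ring

lemma my_nu (v : M) (b : CliffordAlgebra Q) :
    ι Q v * b - involute b * ι Q v = contractLeft (QuadraticMap.polarBilin Q v) b := by
  induction b using CliffordAlgebra.induction with
  | algebraMap r =>
      rw [AlgHom.commutes, contractLeft_algebraMap, Algebra.commutes, sub_self]
  | ι m =>
      rw [involute_ι, contractLeft_ι, QuadraticMap.polarBilin_apply_apply, neg_mul, sub_neg_eq_add,
        ι_mul_ι_add_swap]
  | add a₁ a₂ h₁ h₂ =>
      simp only [map_add]
      rw [← h₁, ← h₂]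
      noncomm_ring
  | mul a₁ a₂ h₁ h₂ =>
      rw [map_mul, my_contractLeft_mul, ← h₁, ← h₂]
      noncomm_ring

end aux

section mono
variable {F U : Type*} [Field F] [AddCommGroup U] [Module F U] {Q : QuadraticForm F U}
variable {n : ℕ} (b : Module.Basis (Fin n) F U)

/-- The Clifford monomial attached to a list of basis indices. -/
noncomputable def bmono (s : List (Fin n)) : CliffordAlgebra Q :=
  (s.map fun i => ι Q (b i)).prod

@[simp] lemma bmono_nil : bmono (Q := Q) b [] = 1 := rfl

lemma bmono_cons (i : Fin n) (s : List (Fin n)) :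
    bmono (Q := Q) b (i :: s) = ι Q (b i) * bmono b s := by
  simp [bmono]

lemma coord_basis (i j : Fin n) : b.coord i (b j) = if j = i then 1 else 0 := by
  simp [Module.Basis.coord_apply, Module.Basis.repr_self, Finsupp.single_apply]

lemma contract_bmono_not_mem (i : Fin n) (s : List (Fin n)) (h : i ∉ s) :
    contractLeft (Q := Q) (b.coord i) (bmono b s) = 0 := by
  induction s with
  | nil => simpa using contractLeft_one (Q := Q) (d := b.coord i)
  | cons j t ih =>
      have hij : j ≠ i := fun e => h (e ▸ List.mem_cons_self)
      rw [bmono_cons, contractLeft_ι_mul, ih (fun hm => h (List.mem_cons_of_mem _ hm)),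
        coord_basis, if_neg hij]
      simp

lemma contract_bmono_head (i : Fin n) (s : List (Fin n)) (h : i ∉ s) :
    contractLeft (Q := Q) (b.coord i) (bmono b (i :: s)) = bmono b s := by
  rw [bmono_cons, contractLeft_ι_mul, contract_bmono_not_mem b i s h, coord_basis, if_pos rfl]
  simp

lemma contract_bmono_mem (i : Fin n) (s : List (Fin n)) (hnd : s.Nodup) (h : i ∈ s) :
    ∃ c : F, contractLeft (Q := Q) (b.coord i) (bmono b s) = c • bmono b (s.erase i) := by
  induction s with
  | nil => exact absurd h (List.not_mem_nil)
  | cons j t ih =>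
      rcases eq_or_ne i j with rfl | hij
      · refine ⟨1, ?_⟩
        rw [List.erase_cons_head, one_smul]
        exact contract_bmono_head b i t (List.Nodup.notMem hnd)
      · have hit : i ∈ t := (List.mem_cons.mp h).resolve_left hij
        obtain ⟨c, hc⟩ := ih (List.Nodup.of_cons hnd) hit
        refine ⟨-c, ?_⟩
        rw [bmono_cons, contractLeft_ι_mul, hc, coord_basis, if_neg (Ne.symm hij),
          List.erase_cons_tail (by simpa using hij.symm), bmono_cons]
        simp [mul_smul_comm]

/-- Iterated contraction along a list of indices. -/
noncomputable def lamL : List (Fin n) → CliffordAlgebra Q →ₗ[F] CliffordAlgebra Q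
  | [] => LinearMap.id
  | i :: t => (lamL t).comp (contractLeft (b.coord i))

@[simp] lemma lamL_nil (x : CliffordAlgebra Q) : lamL b [] x = x := rfl

@[simp] lemma lamL_cons (i : Fin n) (t : List (Fin n)) (x : CliffordAlgebra Q) :
    lamL b (i :: t) x = lamL b t (contractLeft (b.coord i) x) := rfl

lemma lamL_bmono (t s : List (Fin n)) (ht : t.Pairwise (· < ·)) (hs : s.Pairwise (· < ·))
    (hlen : s.length ≤ t.length) :
    lamL b t (bmono (Q := Q) b s) = if t = s then 1 else 0 := by
  induction t generalizing s with
  | nil =>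
      have : s = [] := List.eq_nil_of_length_eq_zero (Nat.le_zero.mp hlen)
      subst this
      simp
  | cons i t' ih =>
      have ht' : t'.Pairwise (· < ·) := ht.of_cons
      have hilt : ∀ a ∈ t', i < a := (List.pairwise_cons.mp ht).1
      by_cases hmem : i ∈ s
      · rcases s with _ | ⟨j, s'⟩
        · exact absurd hmem (List.not_mem_nil)
        · have hs' : s'.Pairwise (· < ·) := hs.of_cons
          have hjlt : ∀ a ∈ s', j < a := (List.pairwise_cons.mp hs).1
          rcases eq_or_ne i j with rfl | hij
          · rw [lamL_cons, contract_bmono_head b i s' (fun hm => lt_irrefl i (hjlt i hm))]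
            rw [ih s' ht' hs' (by simpa using Nat.succ_le_succ_iff.mp hlen)]
            by_cases he : t' = s'
            · simp [he]
            · simp [he, fun h : i :: t' = i :: s' => he (by injection h)]
          · -- i ∈ s', j < i
            have his' : i ∈ s' := (List.mem_cons.mp hmem).resolve_left hij
            have hji : j < i := hjlt i his'
            obtain ⟨c, hc⟩ := contract_bmono_mem b i (j :: s') hs.nodup hmem
            rw [lamL_cons, hc, map_smul]
            have herase : (j :: s').erase i = j :: s'.erase i :=
              List.erase_cons_tail (by simpa using hij.symm)
            have hlen' : (j :: s'.erase i).length ≤ t'.length := by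
              have := List.length_erase_add_one his'
              simp only [List.length_cons] at hlen ⊢
              omega
            have hsort' : (j :: s'.erase i).Pairwise (· < ·) := by
              rw [← herase]
              exact hs.sublist List.erase_sublist
            rw [herase, ih _ ht' hsort' hlen']
            have hne : t' ≠ j :: s'.erase i := by
              intro he
              have : j ∈ t' := he ▸ List.mem_cons_self
              exact lt_asymm hji (hilt j this)
            have hne2 : i :: t' ≠ j :: s' := fun h => hij (by injection h)
            simp [hne, hne2]
      · rw [lamL_cons, contract_bmono_not_mem b i s hmem, map_zero]
        have : i :: t' ≠ s := fun h => hmem (h ▸ List.mem_cons_self)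
        simp [this]

end mono

section span
variable {F U : Type*} [Field F] [AddCommGroup U] [Module F U] {Q : QuadraticForm F U}
variable {n : ℕ} (b : Module.Basis (Fin n) F U)

/-- The span of sorted Clifford monomials of length at most `k`. -/
noncomputable def Wspan (k : ℕ) : Submodule F (CliffordAlgebra Q) :=
  Submodule.span F {x | ∃ s : List (Fin n), s.Pairwise (· < ·) ∧ s.length ≤ k ∧ x = bmono b s}

lemma bmono_mem_Wspan {k : ℕ} {s : List (Fin n)} (hs : s.Pairwise (· < ·)) (hl : s.length ≤ k) :
    bmono (Q := Q) b s ∈ Wspan b k :=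
  Submodule.subset_span ⟨s, hs, hl, rfl⟩

lemma Wspan_mono {k l : ℕ} (h : k ≤ l) : Wspan (Q := Q) b k ≤ Wspan b l :=
  Submodule.span_mono fun _ ⟨s, hs, hl, hx⟩ => ⟨s, hs, hl.trans h, hx⟩

theorem keyW (k : ℕ) (i : Fin n) : ∀ x ∈ Wspan (Q := Q) b k,
    ι Q (b i) * x ∈ Wspan b (k + 1) := by
  intro x hx
  induction hx using Submodule.span_induction with
  | mem x hxx =>
    obtain ⟨s, hs, hl, rfl⟩ := hxx
    rcases s with _ | ⟨j, s'⟩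
    · rw [bmono_nil, mul_one]
      have : ι Q (b i) = bmono (Q := Q) b [i] := by simp [bmono_cons]
      rw [this]
      exact bmono_mem_Wspan b (List.pairwise_singleton _ i) (by simp)
    · have hs' : s'.Pairwise (· < ·) := hs.of_cons
      have hjlt : ∀ a ∈ s', j < a := (List.pairwise_cons.mp hs).1
      rcases lt_trichotomy i j with hij | rfl | hij
      · have hsort : (i :: j :: s').Pairwise (· < ·) :=
          List.pairwise_cons.mpr ⟨fun a ha => by
            rcases List.mem_cons.mp ha with rfl | ha
            · exact hij
            · exact hij.trans (hjlt a ha), hs⟩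
        rw [← bmono_cons]
        exact bmono_mem_Wspan b hsort (by simpa using Nat.succ_le_succ hl)
      · rw [bmono_cons, ← mul_assoc, ι_sq_scalar, ← Algebra.smul_def]
        refine Submodule.smul_mem _ _ (bmono_mem_Wspan b hs' ?_)
        simp only [List.length_cons] at hl
        omega
      · -- j < i
        have hk1 : 1 ≤ k := le_trans (by simp) hl
        have hinner : ι Q (b i) * bmono (Q := Q) b s' ∈ Wspan b (k - 1 + 1) :=
          keyW (k - 1) i _ (bmono_mem_Wspan b hs' (by simp only [List.length_cons] at hl; omega))
        rw [Nat.sub_add_cancel hk1] at hinner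
        have houter : ι Q (b j) * (ι Q (b i) * bmono (Q := Q) b s') ∈ Wspan b (k + 1) :=
          keyW k j _ hinner
        rw [bmono_cons, ← mul_assoc, ι_mul_ι_comm, sub_mul, ← Algebra.smul_def, mul_assoc]
        refine sub_mem (Submodule.smul_mem _ _ (bmono_mem_Wspan b hs' ?_)) houter
        simp only [List.length_cons] at hl
        omega
  | zero => simp
  | add x y _ _ hx hy => rw [mul_add]; exact add_mem hx hy
  | smul c x _ hx => rw [mul_smul_comm]; exact Submodule.smul_mem _ _ hx
termination_by (k, (i : ℕ))
decreasing_by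
  · exact Prod.Lex.left _ _ (by omega)
  · exact Prod.Lex.right _ (by omega)

lemma bmono_mul_mem (s : List (Fin n)) (hs : s.Pairwise (· < ·)) {l : ℕ} {y : CliffordAlgebra Q}
    (hy : y ∈ Wspan b l) : bmono (Q := Q) b s * y ∈ Wspan b (s.length + l) := by
  induction s with
  | nil => simpa using hy
  | cons j s' ih =>
      rw [bmono_cons, mul_assoc]
      have := keyW b (s'.length + l) j _ (ih hs.of_cons)
      simpa [Nat.add_right_comm] using this

lemma mul_mem_Wspan {k l : ℕ} {x y : CliffordAlgebra Q} (hx : x ∈ Wspan b k)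
    (hy : y ∈ Wspan b l) : x * y ∈ Wspan b (k + l) := by
  induction hx using Submodule.span_induction with
  | mem x hxx =>
      obtain ⟨s, hs, hl, rfl⟩ := hxx
      exact Wspan_mono b (by omega) (bmono_mul_mem b s hs hy)
  | zero => simp
  | add x₁ x₂ _ _ h₁ h₂ => rw [add_mul]; exact add_mem h₁ h₂
  | smul c x _ h => rw [smul_mul_assoc]; exact Submodule.smul_mem _ _ h

lemma exists_mem_Wspan (x : CliffordAlgebra Q) : ∃ k, x ∈ Wspan b k := by
  induction x using CliffordAlgebra.induction with
  | algebraMap r =>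
      refine ⟨0, ?_⟩
      have : algebraMap F (CliffordAlgebra Q) r = r • bmono (Q := Q) b [] := by
        simp [Algebra.smul_def]
      rw [this]
      exact Submodule.smul_mem _ _ (bmono_mem_Wspan b (List.Pairwise.nil) (by simp))
  | ι u =>
      refine ⟨1, ?_⟩
      have hu : u = ∑ i, b.repr u i • b i := (b.sum_repr u).symm
      rw [hu, map_sum]
      refine Submodule.sum_mem _ fun i _ => ?_
      rw [map_smul]
      refine Submodule.smul_mem _ _ ?_
      have : ι Q (b i) = bmono (Q := Q) b [i] := by simp [bmono_cons]
      rw [this]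
      exact bmono_mem_Wspan b (List.pairwise_singleton _ i) (by simp)
  | mul x y hx hy =>
      obtain ⟨k, hk⟩ := hx
      obtain ⟨l, hl⟩ := hy
      exact ⟨k + l, mul_mem_Wspan b hk hl⟩
  | add x y hx hy =>
      obtain ⟨k, hk⟩ := hx
      obtain ⟨l, hl⟩ := hy
      exact ⟨max k l, add_mem (Wspan_mono b (le_max_left _ _) hk)
        (Wspan_mono b (le_max_right _ _) hl)⟩

lemma descend (h1 : (1 : CliffordAlgebra Q) ≠ 0) (z : CliffordAlgebra Q)
    (hz : ∀ d : Module.Dual F U, contractLeft (Q := Q) d z = 0)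
    (k : ℕ) (hk : z ∈ Wspan b (k + 1)) : z ∈ Wspan b k := by
  classical
  have hlam : ∀ (a : Fin n) (t : List (Fin n)), lamL b (a :: t) z = 0 := by
    intro a t
    rw [lamL_cons, hz, map_zero]
  obtain ⟨m, c, g, hg⟩ := Submodule.mem_span_set'.mp hk
  choose sl hsort hlen heq using fun i => (g i).2
  have hzeq : z = ∑ i, c i • bmono (Q := Q) b (sl i) := by
    rw [← hg]
    exact Finset.sum_congr rfl fun i _ => by rw [heq]
  set B : Finset (Fin m) := Finset.univ.filter (fun i => ¬ (sl i).length ≤ k) with hB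
  have hBlen : ∀ i ∈ B, (sl i).length = k + 1 := by
    intro i hi
    have h2 := hlen i
    have h3 := (Finset.mem_filter.mp hi).2
    omega
  -- each fiber over a maximal-length monomial sums to zero
  have hfiber : ∀ j ∈ Finset.image sl B,
      ∑ i ∈ B.filter (fun i => sl i = j), c i • bmono (Q := Q) b (sl i) = 0 := by
    intro j hj
    obtain ⟨i0, hi0, rfl⟩ := Finset.mem_image.mp hj
    have hlen0 : (sl i0).length = k + 1 := hBlen i0 hi0
    -- compute lamL (sl i0) z
    have h0 : lamL b (sl i0) z = 0 := by
      rcases hsl0 : sl i0 with _ | ⟨a, t⟩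
      · rw [hsl0] at hlen0; simp at hlen0
      · exact hlam a t
    rw [hzeq, map_sum] at h0
    have hterm : ∀ i : Fin m, lamL b (sl i0) (c i • bmono (Q := Q) b (sl i)) =
        if sl i0 = sl i then c i • 1 else 0 := by
      intro i
      rw [map_smul, lamL_bmono b (sl i0) (sl i) (hsort i0) (hsort i) (by rw [hlen0]; exact hlen i)]
      split_ifs <;> simp
    rw [Finset.sum_congr rfl (fun i _ => hterm i), ← Finset.sum_filter] at h0
    have hsetseq : Finset.filter (fun i => sl i0 = sl i) Finset.univ
        = Finset.filter (fun i => sl i = sl i0) B := by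
      ext i
      simp only [Finset.mem_filter, Finset.mem_univ, true_and, hB]
      constructor
      · intro h
        have hli : (sl i).length = k + 1 := by rw [← h, hlen0]
        exact ⟨by omega, h.symm⟩
      · exact fun h => h.2.symm
    rw [hsetseq, ← Finset.sum_smul] at h0
    have hc0 : ∑ i ∈ Finset.filter (fun i => sl i = sl i0) B, c i = 0 :=
      (smul_eq_zero.mp h0).resolve_right h1
    calc ∑ i ∈ Finset.filter (fun i => sl i = sl i0) B, c i • bmono (Q := Q) b (sl i)
        = ∑ i ∈ Finset.filter (fun i => sl i = sl i0) B, c i • bmono (Q := Q) b (sl i0) :=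
          Finset.sum_congr rfl fun i hi => by rw [(Finset.mem_filter.mp hi).2]
      _ = (∑ i ∈ Finset.filter (fun i => sl i = sl i0) B, c i) • bmono (Q := Q) b (sl i0) :=
          (Finset.sum_smul).symm
      _ = 0 := by rw [hc0, zero_smul]
  have hBsum : ∑ i ∈ B, c i • bmono (Q := Q) b (sl i) = 0 := by
    rw [← Finset.sum_fiberwise_of_maps_to (fun i hi => Finset.mem_image_of_mem sl hi)
      (fun i => c i • bmono (Q := Q) b (sl i))]
    exact Finset.sum_eq_zero hfiber
  have hzz : z = ∑ i ∈ Finset.univ \ B, c i • bmono (Q := Q) b (sl i) := by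
    rw [hzeq, ← Finset.sum_sdiff (Finset.subset_univ B), hBsum, add_zero]
  rw [hzz]
  refine Submodule.sum_mem _ fun i hi => Submodule.smul_mem _ _ (bmono_mem_Wspan b (hsort i) ?_)
  have h4 := (Finset.mem_sdiff.mp hi).2
  simp only [hB, Finset.mem_filter, Finset.mem_univ, true_and, not_not] at h4
  exact h4

include b in
lemma scalar_of_contract_zero (h1 : (1 : CliffordAlgebra Q) ≠ 0) (z : CliffordAlgebra Q)
    (hz : ∀ d : Module.Dual F U, contractLeft (Q := Q) d z = 0) :
    ∃ c : F, z = algebraMap F (CliffordAlgebra Q) c := by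
  obtain ⟨k, hk⟩ := exists_mem_Wspan b z
  have h0 : z ∈ Wspan b 0 := by
    induction k with
    | zero => exact hk
    | succ k ih => exact ih (descend b h1 z hz k hk)
  have : Wspan (Q := Q) b 0 ≤ Submodule.span F {(1 : CliffordAlgebra Q)} := by
    refine Submodule.span_le.mpr ?_
    rintro x ⟨s, hs, hl, rfl⟩
    have : s = [] := List.eq_nil_of_length_eq_zero (Nat.le_zero.mp hl)
    subst this
    exact Submodule.mem_span_singleton.mpr ⟨1, by simp⟩
  obtain ⟨c, hc⟩ := Submodule.mem_span_singleton.mp (this h0)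
  exact ⟨c, by rw [← hc, Algebra.algebraMap_eq_smul_one]⟩

end span


section main
variable {F U : Type*} [Field F] [AddCommGroup U] [Module F U] {Q : QuadraticForm F U}

lemma my_ι_injective [Invertible (2 : F)] :
    Function.Injective (ι Q : U →ₗ[F] CliffordAlgebra Q) := by
  intro u v h
  have h2 : equivExterior Q (ι Q u) = equivExterior Q (ι Q v) := by rw [h]
  simp only [equivExterior, changeFormEquiv_apply, changeForm_ι] at h2
  exact (ExteriorAlgebra.ι_inj F u v).mp h2

end main

theorem stmt_17 {F : Type*} [Field F] (hchar : (2 : F) ≠ 0)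
    {U : Type*} [AddCommGroup U] [Module F U] [FiniteDimensional F U]
    (S : LinearMap.BilinForm F U) (hS : ∀ x y, S x y = S y x)
    (hnd : ∀ x : U, (∀ y : U, S x y = 0) → x = 0)
    (Q : QuadraticForm F U) (hQ : ∀ u, Q u = -(S u u))
    (x : (CliffordAlgebra Q)ˣ)
    (hx : ∀ u : U, ∃ w : U, (x : CliffordAlgebra Q) * ι Q u *
      involute (↑x⁻¹ : CliffordAlgebra Q) = ι Q w) :
    ∀ (c : F) (u : U), ∃ (c' : F) (u' : U),
      (x : CliffordAlgebra Q) * (algebraMap F (CliffordAlgebra Q) c + ι Q u) *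
        involute (↑x⁻¹ : CliffordAlgebra Q)
        = algebraMap F (CliffordAlgebra Q) c' + ι Q u' := by
  haveI : Invertible (2 : F) := invertibleOfNonzero hchar
  have hxcxi : (↑x : CliffordAlgebra Q) * ↑x⁻¹ = 1 := x.mul_inv
  have hxixc : (↑x⁻¹ : CliffordAlgebra Q) * ↑x = 1 := x.inv_mul
  have hAB : involute (↑x : CliffordAlgebra Q) * involute (↑x⁻¹ : CliffordAlgebra Q) = 1 := by
    rw [← map_mul, hxcxi, map_one]
  have hBA : involute (↑x⁻¹ : CliffordAlgebra Q) * involute (↑x : CliffordAlgebra Q) = 1 := by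
    rw [← map_mul, hxixc, map_one]
  choose ρf hρ using hx
  -- the involuted version of the defining property
  have hρA : ∀ u, involute (↑x : CliffordAlgebra Q) * ι Q u * (↑x⁻¹ : CliffordAlgebra Q)
      = ι Q (ρf u) := by
    intro u
    have h3 := congrArg involute (hρ u)
    simp only [map_mul, involute_ι, involute_involute, mul_neg, neg_mul, neg_inj] at h3
    exact h3
  -- cancellation lemma
  have hcancel : ∀ u : U, (↑x⁻¹ : CliffordAlgebra Q) *
      ((↑x : CliffordAlgebra Q) * ι Q u * involute (↑x⁻¹ : CliffordAlgebra Q)) *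
      involute (↑x : CliffordAlgebra Q) = ι Q u := by
    intro u
    calc (↑x⁻¹ : CliffordAlgebra Q) *
        ((↑x : CliffordAlgebra Q) * ι Q u * involute (↑x⁻¹ : CliffordAlgebra Q)) *
        involute (↑x : CliffordAlgebra Q)
        = ((↑x⁻¹ : CliffordAlgebra Q) * ↑x) * ι Q u *
          (involute (↑x⁻¹ : CliffordAlgebra Q) * involute (↑x : CliffordAlgebra Q)) := by
          noncomm_ring
      _ = ι Q u := by rw [hxixc, hBA, one_mul, mul_one]
  -- z and its basic properties
  set z : CliffordAlgebra Q := (↑x : CliffordAlgebra Q) * involute (↑x⁻¹ : CliffordAlgebra Q)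
    with hz
  have hinvz : involute z = involute (↑x : CliffordAlgebra Q) * (↑x⁻¹ : CliffordAlgebra Q) := by
    rw [hz, map_mul, involute_involute]
  have hziz : involute z * z = 1 := by
    rw [hinvz, hz]
    calc involute (↑x : CliffordAlgebra Q) * (↑x⁻¹ : CliffordAlgebra Q) *
        ((↑x : CliffordAlgebra Q) * involute (↑x⁻¹ : CliffordAlgebra Q))
        = involute (↑x : CliffordAlgebra Q) * ((↑x⁻¹ : CliffordAlgebra Q) * ↑x) *
          involute (↑x⁻¹ : CliffordAlgebra Q) := by noncomm_ring
      _ = 1 := by rw [hxixc, mul_one, hAB]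
  have hfix : ∀ u : U, z * ι Q (ρf u) * z = ι Q (ρf u) := by
    intro u
    have h4 : z * ι Q (ρf u) = (↑x : CliffordAlgebra Q) * ι Q u * (↑x⁻¹ : CliffordAlgebra Q) := by
      rw [← hρA u, hz]
      calc (↑x : CliffordAlgebra Q) * involute (↑x⁻¹ : CliffordAlgebra Q) *
          (involute (↑x : CliffordAlgebra Q) * ι Q u * (↑x⁻¹ : CliffordAlgebra Q))
          = (↑x : CliffordAlgebra Q) *
            (involute (↑x⁻¹ : CliffordAlgebra Q) * involute (↑x : CliffordAlgebra Q)) *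
            ι Q u * (↑x⁻¹ : CliffordAlgebra Q) := by noncomm_ring
        _ = (↑x : CliffordAlgebra Q) * ι Q u * (↑x⁻¹ : CliffordAlgebra Q) := by
            rw [hBA, mul_one]
    rw [h4, hz]
    calc (↑x : CliffordAlgebra Q) * ι Q u * (↑x⁻¹ : CliffordAlgebra Q) *
        ((↑x : CliffordAlgebra Q) * involute (↑x⁻¹ : CliffordAlgebra Q))
        = (↑x : CliffordAlgebra Q) * ι Q u * ((↑x⁻¹ : CliffordAlgebra Q) * ↑x) *
          involute (↑x⁻¹ : CliffordAlgebra Q) := by noncomm_ring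
      _ = (↑x : CliffordAlgebra Q) * ι Q u * involute (↑x⁻¹ : CliffordAlgebra Q) := by
          rw [hxixc, mul_one]
      _ = ι Q (ρf u) := hρ u
  -- ρf is linear and injective, hence surjective
  have hmapsmul : ∀ (c : F) (u : U), ρf (c • u) = c • ρf u := by
    intro c u
    apply my_ι_injective (Q := Q)
    show ι Q (ρf (c • u)) = ι Q (c • ρf u)
    rw [map_smul, ← hρ, ← hρ, map_smul, mul_smul_comm, smul_mul_assoc]
  have hmapadd : ∀ (u v : U), ρf (u + v) = ρf u + ρf v := by
    intro u v
    apply my_ι_injective (Q := Q)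
    show ι Q (ρf (u + v)) = ι Q (ρf u + ρf v)
    rw [map_add, ← hρ, ← hρ, ← hρ, map_add]
    noncomm_ring
  have hρinj : Function.Injective
      ({ toFun := ρf, map_add' := hmapadd, map_smul' := hmapsmul } : U →ₗ[F] U) := by
    intro u v huv
    have h5 : ι Q (ρf u) = ι Q (ρf v) := by
      simp only [LinearMap.coe_mk, AddHom.coe_mk] at huv
      rw [huv]
    rw [← hρ, ← hρ] at h5
    have h6 : ι Q u = ι Q v := by rw [← hcancel u, h5, hcancel v]
    exact my_ι_injective (Q := Q) h6
  have hρsurj : Function.Surjective ρf :=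
    LinearMap.injective_iff_surjective.mp hρinj
  have hfixall : ∀ v : U, z * ι Q v * z = ι Q v := by
    intro v
    obtain ⟨u, rfl⟩ := hρsurj v
    exact hfix u
  have hT : ∀ v : U, ι Q v * z = involute z * ι Q v := by
    intro v
    calc ι Q v * z = (involute z * z) * (ι Q v * z) := by rw [hziz, one_mul]
      _ = involute z * (z * ι Q v * z) := by noncomm_ring
      _ = involute z * ι Q v := by rw [hfixall]
  -- all contractions of z vanish
  have hcontr : ∀ d : Module.Dual F U, contractLeft (Q := Q) d z = 0 := by
    intro d
    have hndS : S.Nondegenerate := ⟨hnd, fun y hy => hnd y fun x => by rw [hS]; exact hy x⟩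
    obtain ⟨v, hv⟩ := (S.toDual hndS).surjective ((-(2 : F)⁻¹) • d)
    have hdv : QuadraticMap.polarBilin Q v = d := by
      ext u
      have h7 : S v u = -(2 : F)⁻¹ * d u := by
        have h7' := congrArg (fun f => f u) hv
        simpa [LinearMap.BilinForm.toDual_def] using h7'
      have h8 : QuadraticMap.polar Q v u = -(2 : F) * S v u := by
        simp only [QuadraticMap.polar, hQ]
        have h9 : S (v + u) (v + u) = S v v + S v u + S u v + S u u := by
          simp only [map_add, LinearMap.add_apply]
          ring
        rw [h9, hS u v]
        ring
      simp only [QuadraticMap.polarBilin_apply_apply, h8, h7]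
      field_simp
    rw [← hdv, ← my_nu v z, hT v, sub_self]
  -- z is a scalar
  haveI : Nontrivial (CliffordAlgebra Q) := inferInstance
  obtain ⟨c₀, hc₀⟩ := scalar_of_contract_zero (Module.finBasis F U)
    (zero_ne_one (α := CliffordAlgebra Q)).symm z hcontr
  -- finish
  intro c u
  refine ⟨c * c₀, ρf u, ?_⟩
  have hsplit : (↑x : CliffordAlgebra Q) * (algebraMap F (CliffordAlgebra Q) c + ι Q u) *
      involute (↑x⁻¹ : CliffordAlgebra Q)
      = algebraMap F (CliffordAlgebra Q) c * z +
        (↑x : CliffordAlgebra Q) * ι Q u * involute (↑x⁻¹ : CliffordAlgebra Q) := by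
    rw [hz]
    calc (↑x : CliffordAlgebra Q) * (algebraMap F (CliffordAlgebra Q) c + ι Q u) *
        involute (↑x⁻¹ : CliffordAlgebra Q)
        = (↑x : CliffordAlgebra Q) * algebraMap F (CliffordAlgebra Q) c *
            involute (↑x⁻¹ : CliffordAlgebra Q) +
          (↑x : CliffordAlgebra Q) * ι Q u * involute (↑x⁻¹ : CliffordAlgebra Q) := by
          noncomm_ring
      _ = _ := by rw [← Algebra.commutes c (↑x : CliffordAlgebra Q), mul_assoc]
  rw [hsplit, hρ u, hc₀, ← map_mul]
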